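/- Let ν : [0,1] → ℝ be continuous and strictly positive, and suppose the maximum of x ↦ (1/ν(x)) ∫ₓ¹ ν(z) dz over [0,1] is attained at a unique point x₀ ∈ (0,1). Then for every ε > 0 there exists δ > 0 such that any increasing function g with g(0)=0 satisfying ∫₀¹ g ν ≥ (1−δ) C ∫₀¹ ν dg (with C the maximum value) has its Stieltjes measure dg concentrated, up to fraction ε of its total mass, on the set A_ε = {z : (1/ν(z))∫_z¹ ν ≥ (1−ε) C}. -/

import Mathlib

open MeasureTheory Set intervalIntegral

open Function in

lemma fubini_aux (ν : ℝ → ℝ) (hν : Continuous ν) (hν0 : ∀ x, 0 ≤ ν x)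
    (g : StieltjesFunction ℝ) (hg0 : g 0 = 0) :
    ∫ x in (0:ℝ)..1, g x * ν x
      = ∫ z in Ioc (0:ℝ) 1, (∫ y in z..1, ν y) ∂g.measure := by
  set μ := g.measure with hμ
  set S : Set (ℝ × ℝ) := {q : ℝ × ℝ | 0 < q.2 ∧ q.2 ≤ q.1} with hS
  have hmeasS : MeasurableSet S :=
    (measurableSet_lt measurable_const measurable_snd).inter
      (measurableSet_le measurable_snd measurable_fst)
  have hgmono : Monotone g := g.mono'
  have hgmeas : Measurable g := hgmono.measurable
  have hgnn : ∀ x ∈ Ioc (0:ℝ) 1, 0 ≤ g x := fun x hx => hg0 ▸ hgmono hx.1.le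
  have hgval : ∀ x : ℝ, 0 ≤ x → ENNReal.ofReal (g x) = μ (Ioc 0 x) := by
    intro x hx
    rw [hμ, StieltjesFunction.measure_Ioc, hg0, sub_zero]
  have hF : Continuous fun z => ∫ y in z..1, ν y := by
    have h1 : ∀ a b : ℝ, IntervalIntegrable ν volume a b := fun a b =>
      hν.intervalIntegrable a b
    have h2 := (intervalIntegral.continuous_primitive h1 (1:ℝ)).neg
    have heq : (fun z => ∫ y in z..1, ν y) = fun z => -∫ y in (1:ℝ)..z, ν y := by
      funext z; rw [intervalIntegral.integral_symm]
    rw [heq]; exact h2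
  have hFnn : ∀ z ∈ Ioc (0:ℝ) 1, 0 ≤ ∫ y in z..1, ν y := fun z hz =>
    intervalIntegral.integral_nonneg hz.2 (fun y _ => hν0 y)
  have hind : ∀ x : ℝ, (fun z => S.indicator (fun _ => (1:ENNReal)) (x, z))
      = (Ioc 0 x).indicator (fun _ => (1:ENNReal)) := by
    intro x; ext z
    by_cases h : z ∈ Ioc (0:ℝ) x
    · rw [Set.indicator_of_mem h, Set.indicator_of_mem]
      exact ⟨h.1, h.2⟩
    · rw [Set.indicator_of_notMem h, Set.indicator_of_notMem]
      simpa [hS, Set.mem_setOf_eq, Set.mem_Ioc] using h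
  -- LHS to lintegral
  have hLHS : ∫ x in (0:ℝ)..1, g x * ν x
      = (∫⁻ x in Ioc (0:ℝ) 1, ENNReal.ofReal (ν x) * μ (Ioc 0 x)).toReal := by
    rw [intervalIntegral.integral_of_le (by norm_num : (0:ℝ) ≤ 1)]
    rw [MeasureTheory.integral_eq_lintegral_of_nonneg_ae]
    · congr 1
      refine setLIntegral_congr_fun measurableSet_Ioc ?_
      intro x hx
      dsimp only
      rw [ENNReal.ofReal_mul (hgnn x hx), ← hgval x hx.1.le, mul_comm]
    · filter_upwards [ae_restrict_mem measurableSet_Ioc] with x hx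
      exact mul_nonneg (hgnn x hx) (hν0 x)
    · exact ((hgmeas.mul hν.measurable).aestronglyMeasurable)
  -- Tonelli
  have hswap : ∫⁻ x in Ioc (0:ℝ) 1, ENNReal.ofReal (ν x) * μ (Ioc 0 x)
      = ∫⁻ z in Ioc (0:ℝ) 1, ENNReal.ofReal (∫ y in z..1, ν y) ∂μ := by
    have huncurry : Measurable (uncurry fun (x z : ℝ) =>
        ENNReal.ofReal (ν x) * S.indicator (fun _ => (1:ENNReal)) (x, z)) := by
      have heq : (uncurry fun (x z : ℝ) =>
          ENNReal.ofReal (ν x) * S.indicator (fun _ => (1:ENNReal)) (x, z))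
          = fun p : ℝ × ℝ => ENNReal.ofReal (ν p.1) * S.indicator (fun _ => (1:ENNReal)) p := by
        funext p; rfl
      rw [heq]
      exact ((ENNReal.measurable_ofReal.comp (hν.measurable.comp measurable_fst))).mul
        (measurable_const.indicator hmeasS)
    calc ∫⁻ x in Ioc (0:ℝ) 1, ENNReal.ofReal (ν x) * μ (Ioc 0 x)
        = ∫⁻ x in Ioc (0:ℝ) 1, ∫⁻ z, ENNReal.ofReal (ν x) *
            S.indicator (fun _ => (1:ENNReal)) (x, z) ∂μ := by
          refine setLIntegral_congr_fun measurableSet_Ioc fun x _ => ?_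
          have h1 : (∫⁻ z, ENNReal.ofReal (ν x) * S.indicator (fun _ => (1:ENNReal)) (x, z) ∂μ)
              = ∫⁻ z, ENNReal.ofReal (ν x) * (Ioc 0 x).indicator (fun _ => (1:ENNReal)) z ∂μ :=
            lintegral_congr fun z => by rw [congrFun (hind x) z]
          rw [h1, lintegral_const_mul _ (measurable_const.indicator measurableSet_Ioc),
            lintegral_indicator measurableSet_Ioc, setLIntegral_one]
      _ = ∫⁻ z, (∫⁻ x in Ioc (0:ℝ) 1, ENNReal.ofReal (ν x) *
            S.indicator (fun _ => (1:ENNReal)) (x, z)) ∂μ :=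
          lintegral_lintegral_swap huncurry.aemeasurable
      _ = ∫⁻ z in Ioc (0:ℝ) 1, ENNReal.ofReal (∫ y in z..1, ν y) ∂μ := by
          rw [← lintegral_indicator (measurableSet_Ioc (a := (0:ℝ)) (b := 1))]
          refine lintegral_congr fun z => ?_
          by_cases hz : z ∈ Ioc (0:ℝ) 1
          · rw [Set.indicator_of_mem hz]
            have hptw : ∀ x : ℝ, ENNReal.ofReal (ν x) * S.indicator (fun _ => (1:ENNReal)) (x, z)
                = (Ici z).indicator (fun x => ENNReal.ofReal (ν x)) x := by
              intro x
              by_cases hx : z ≤ x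
              · rw [Set.indicator_of_mem (show x ∈ Ici z from hx),
                  Set.indicator_of_mem (show (x, z) ∈ S from ⟨hz.1, hx⟩), mul_one]
              · rw [Set.indicator_of_notMem (show x ∉ Ici z from hx),
                  Set.indicator_of_notMem (show (x, z) ∉ S from fun h => hx h.2), mul_zero]
            calc ∫⁻ x in Ioc (0:ℝ) 1, ENNReal.ofReal (ν x) *
                  S.indicator (fun _ => (1:ENNReal)) (x, z)
                = ∫⁻ x in Ioc (0:ℝ) 1, (Ici z).indicator (fun x => ENNReal.ofReal (ν x)) x :=
                  setLIntegral_congr_fun measurableSet_Ioc fun x _ => hptw x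
              _ = ∫⁻ x in Ici z ∩ Ioc 0 1, ENNReal.ofReal (ν x) := by
                  rw [lintegral_indicator measurableSet_Ici,
                    Measure.restrict_restrict measurableSet_Ici]
              _ = ∫⁻ x in Icc z 1, ENNReal.ofReal (ν x) := by
                  have hset : Ici z ∩ Ioc 0 1 = Icc z 1 := by
                    ext x
                    simp only [Set.mem_inter_iff, Set.mem_Ici, Set.mem_Ioc, Set.mem_Icc]
                    constructor
                    · rintro ⟨h1, _, h3⟩; exact ⟨h1, h3⟩
                    · rintro ⟨h1, h2⟩; exact ⟨h1, hz.1.trans_le h1, h2⟩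
                  rw [hset]
              _ = ∫⁻ x in Ioc z 1, ENNReal.ofReal (ν x) :=
                  (setLIntegral_congr (MeasureTheory.Ioc_ae_eq_Icc)).symm
              _ = ENNReal.ofReal (∫ y in z..1, ν y) := by
                  rw [intervalIntegral.integral_of_le hz.2,
                    MeasureTheory.ofReal_integral_eq_lintegral_ofReal
                      (hν.integrableOn_Ioc) (ae_of_all _ hν0)]
          · rw [Set.indicator_of_notMem hz]
            have hz' : ¬(0 < z ∧ z ≤ 1) := hz
            have h0 : ∀ x ∈ Ioc (0:ℝ) 1,
                ENNReal.ofReal (ν x) * S.indicator (fun _ => (1:ENNReal)) (x, z) = 0 := by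
              intro x hx
              have hns : (x, z) ∉ S := by
                rintro ⟨h1, h2⟩
                rcases not_and_or.mp hz' with h | h
                · exact h h1
                · exact h (h2.trans hx.2)
              rw [Set.indicator_of_notMem hns, mul_zero]
            rw [setLIntegral_congr_fun measurableSet_Ioc h0, lintegral_zero]
  -- RHS from lintegral
  have hRHS : ∫ z in Ioc (0:ℝ) 1, (∫ y in z..1, ν y) ∂μ
      = (∫⁻ z in Ioc (0:ℝ) 1, ENNReal.ofReal (∫ y in z..1, ν y) ∂μ).toReal := by
    rw [MeasureTheory.integral_eq_lintegral_of_nonneg_ae]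
    · filter_upwards [ae_restrict_mem measurableSet_Ioc] with z hz using hFnn z hz
    · exact hF.aestronglyMeasurable
  rw [hLHS, hswap, hRHS]

/-- Near-extremizers of the weighted L¹ Poincaré inequality: if the isoperimetric
ratio `(1/ν(x))∫ₓ¹ ν` has a unique maximum point `x₀ ∈ (0,1)` with maximal value
`C`, then for every `ε > 0` there is `δ > 0` such that every increasing
right-continuous `g` with `g 0 = 0` satisfying
`∫₀¹ g ν ≥ (1-δ) C ∫₀¹ ν dg` has all but an `ε`-fraction of the mass of its
Stieltjes measure `dg` on the set where the ratio exceeds `(1-ε) C`. -/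

theorem stmt_13 (ν : ℝ → ℝ)
    (hν : ContinuousOn ν (Icc 0 1)) (hνpos : ∀ x ∈ Icc (0:ℝ) 1, 0 < ν x)
    (C : ℝ)
    (hC : IsGreatest ((fun x => (1 / ν x) * ∫ z in x..1, ν z) '' Icc 0 1) C)
    (x₀ : ℝ) (hx₀ : x₀ ∈ Ioo (0:ℝ) 1)
    (hmax : (1 / ν x₀) * ∫ z in x₀..1, ν z = C)
    (huniq : ∀ x ∈ Icc (0:ℝ) 1, (1 / ν x) * (∫ z in x..1, ν z) = C → x = x₀)
    (ε : ℝ) (hε : 0 < ε) :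
    ∃ δ > 0, ∀ g : StieltjesFunction ℝ, g 0 = 0 →
      (∫ x in (0:ℝ)..1, g x * ν x) ≥
        (1 - δ) * C * (∫ z in Icc (0:ℝ) 1, ν z ∂g.measure) →
      g.measure {z ∈ Icc (0:ℝ) 1 | (1 / ν z) * (∫ y in z..1, ν y) < (1 - ε) * C} ≤
        ENNReal.ofReal ε * g.measure (Icc (0:ℝ) 1) := by
  -- extend ν continuously by clamping
  set ν' : ℝ → ℝ := fun x => ν (min 1 (max 0 x)) with hν'def
  have hclamp : ∀ x : ℝ, min 1 (max 0 x) ∈ Icc (0:ℝ) 1 := fun x =>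
    ⟨le_min zero_le_one (le_max_left 0 x), min_le_left _ _⟩
  have hν' : Continuous ν' :=
    hν.comp_continuous (continuous_const.min (continuous_const.max continuous_id)) hclamp
  have hagree : ∀ x ∈ Icc (0:ℝ) 1, ν' x = ν x := by
    intro x hx
    simp only [hν'def]
    rw [max_eq_right hx.1, min_eq_right hx.2]
  have hν'nn : ∀ x, 0 ≤ ν' x := fun x => (hνpos _ (hclamp x)).le
  have hν'pos : ∀ x ∈ Icc (0:ℝ) 1, 0 < ν' x := fun x hx => (hagree x hx).symm ▸ hνpos x hx
  have hintagree : ∀ z ∈ Icc (0:ℝ) 1, (∫ y in z..1, ν y) = ∫ y in z..1, ν' y := by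
    intro z hz
    refine intervalIntegral.integral_congr fun y hy => ?_
    rw [uIcc_of_le hz.2] at hy
    exact (hagree y ⟨hz.1.trans hy.1, hy.2⟩).symm
  set F : ℝ → ℝ := fun z => ∫ y in z..1, ν' y with hFdef
  have hFcont : Continuous F := by
    have h1 : ∀ a b : ℝ, IntervalIntegrable ν' volume a b := fun a b =>
      hν'.intervalIntegrable a b
    have h2 := (intervalIntegral.continuous_primitive h1 (1:ℝ)).neg
    have heq : F = fun z => -∫ y in (1:ℝ)..z, ν' y := by
      funext z
      simp only [hFdef]
      rw [intervalIntegral.integral_symm 1 z]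
    rw [heq]; exact h2
  have hFnn : ∀ z ∈ Icc (0:ℝ) 1, 0 ≤ F z := fun z hz =>
    intervalIntegral.integral_nonneg hz.2 (fun y _ => hν'nn y)
  -- min and max of ν' on the interval
  obtain ⟨a, haI, hamin⟩ := isCompact_Icc.exists_isMinOn (nonempty_Icc.mpr zero_le_one)
    (hν'.continuousOn (s := Icc (0:ℝ) 1))
  obtain ⟨b, hbI, hbmax⟩ := isCompact_Icc.exists_isMaxOn (nonempty_Icc.mpr zero_le_one)
    (hν'.continuousOn (s := Icc (0:ℝ) 1))
  set m := ν' a with hmdef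
  set M := ν' b with hMdef
  have hm : 0 < m := hν'pos a haI
  have hM : 0 < M := hν'pos b hbI
  have hmle : ∀ z ∈ Icc (0:ℝ) 1, m ≤ ν' z := fun z hz => hamin hz
  have hMle : ∀ z ∈ Icc (0:ℝ) 1, ν' z ≤ M := fun z hz => hbmax hz
  -- C > 0
  have hx₀I : x₀ ∈ Icc (0:ℝ) 1 := ⟨hx₀.1.le, hx₀.2.le⟩
  have hCpos : 0 < C := by
    rw [← hmax, hintagree x₀ hx₀I]
    have hIpos : 0 < ∫ y in x₀..1, ν' y :=
      intervalIntegral.intervalIntegral_pos_of_pos_on (hν'.intervalIntegrable _ _)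
        (fun y hy => hν'pos y ⟨hx₀.1.le.trans hy.1.le, hy.2.le⟩) hx₀.2
    have := hνpos x₀ hx₀I
    positivity
  -- the key upper bound F z ≤ C ν' z
  have hCle : ∀ z ∈ Icc (0:ℝ) 1, F z ≤ C * ν' z := by
    intro z hz
    have h := hC.2 (mem_image_of_mem _ hz)
    have hz0 : 0 < ν z := hνpos z hz
    rw [one_div, inv_mul_le_iff₀ hz0] at h
    rw [hagree z hz]
    show (∫ y in z..1, ν' y) ≤ C * ν z
    rw [← hintagree z hz]
    linarith
  refine ⟨ε ^ 2 * m / M, by positivity, fun g hg0 hint => ?_⟩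
  set μ := g.measure with hμdef
  set δ : ℝ := ε ^ 2 * m / M with hδdef
  have hμfin : μ (Icc (0:ℝ) 1) < ⊤ := isCompact_Icc.measure_lt_top
  set T : ℝ := (μ (Icc (0:ℝ) 1)).toReal with hTdef
  have hT0 : 0 ≤ T := ENNReal.toReal_nonneg
  -- integrals over μ
  have hFint : IntegrableOn F (Icc (0:ℝ) 1) μ := hFcont.integrableOn_Icc
  have hν'int : IntegrableOn ν' (Icc (0:ℝ) 1) μ := hν'.integrableOn_Icc
  set I : ℝ := ∫ z in Icc (0:ℝ) 1, ν' z ∂μ with hIdef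
  have hIν : (∫ z in Icc (0:ℝ) 1, ν z ∂μ) = I := by
    rw [hIdef]
    exact setIntegral_congr_fun measurableSet_Icc fun z hz => (hagree z hz).symm
  -- step 1: (1-δ) C I ≤ ∫_{Icc} F dμ
  have hstep1 : (1 - δ) * C * I ≤ ∫ z in Icc (0:ℝ) 1, F z ∂μ := by
    have e1 : (∫ x in (0:ℝ)..1, g x * ν x) = ∫ x in (0:ℝ)..1, g x * ν' x := by
      refine intervalIntegral.integral_congr fun x hx => ?_
      rw [uIcc_of_le zero_le_one] at hx
      rw [hagree x hx]
    have e2 := fubini_aux ν' hν' hν'nn g hg0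
    have e3 : (∫ z in Ioc (0:ℝ) 1, F z ∂μ) ≤ ∫ z in Icc (0:ℝ) 1, F z ∂μ := by
      refine setIntegral_mono_set hFint ?_ (HasSubset.Subset.eventuallyLE Ioc_subset_Icc_self)
      filter_upwards [ae_restrict_mem measurableSet_Icc] with z hz using hFnn z hz
    calc (1 - δ) * C * I = (1 - δ) * C * (∫ z in Icc (0:ℝ) 1, ν z ∂μ) := by rw [hIν]
      _ ≤ ∫ x in (0:ℝ)..1, g x * ν x := hint
      _ = ∫ z in Ioc (0:ℝ) 1, F z ∂μ := by rw [e1, e2]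
      _ ≤ ∫ z in Icc (0:ℝ) 1, F z ∂μ := e3
  -- the bad set
  set B : Set ℝ := {z ∈ Icc (0:ℝ) 1 | (1 / ν' z) * F z < (1 - ε) * C} with hBdef
  have hBsub : B ⊆ Icc (0:ℝ) 1 := sep_subset _ _
  have hBmeas : MeasurableSet B :=
    measurableSet_Icc.inter (measurableSet_lt
      ((measurable_const.div hν'.measurable).mul hFcont.measurable) measurable_const)
  have hμBfin : μ B ≠ ⊤ := ((measure_mono hBsub).trans_lt hμfin).ne
  -- pointwise bound on B
  have hBptw : ∀ z ∈ B, ε * C * m ≤ C * ν' z - F z := by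
    intro z hz
    obtain ⟨hzI, hzlt⟩ := hz
    have hz0 := hν'pos z hzI
    rw [one_div, inv_mul_lt_iff₀ hz0] at hzlt
    have h1 : F z < (1 - ε) * C * ν' z := by linarith [hzlt]
    have h2 : m ≤ ν' z := hmle z hzI
    have h3 : ε * C * m ≤ ε * C * ν' z :=
      mul_le_mul_of_nonneg_left h2 (by positivity)
    nlinarith [h1, h3]
  -- step 2
  have hsub : (∫ z in Icc (0:ℝ) 1, (C * ν' z - F z) ∂μ)
      = C * I - ∫ z in Icc (0:ℝ) 1, F z ∂μ := by
    rw [integral_sub (hν'int.const_mul C) hFint, MeasureTheory.integral_const_mul]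
  have hstep2 : ε * C * m * (μ B).toReal ≤ ∫ z in Icc (0:ℝ) 1, (C * ν' z - F z) ∂μ := by
    have hint1 : IntegrableOn (fun z => C * ν' z - F z) (Icc (0:ℝ) 1) μ :=
      (hν'int.const_mul C).sub hFint
    have hintB : IntegrableOn (fun z => C * ν' z - F z) B μ := hint1.mono_set hBsub
    have h4 : (∫ z in B, (ε * C * m) ∂μ) ≤ ∫ z in B, (C * ν' z - F z) ∂μ := by
      refine setIntegral_mono_on (integrableOn_const ((measure_mono hBsub).trans_lt hμfin).ne)
        hintB hBmeas hBptw
    have h5 : (∫ z in B, (ε * C * m) ∂μ) = (μ B).toReal * (ε * C * m) := by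
      rw [setIntegral_const, smul_eq_mul, measureReal_def]
    have h6 : (∫ z in B, (C * ν' z - F z) ∂μ) ≤ ∫ z in Icc (0:ℝ) 1, (C * ν' z - F z) ∂μ := by
      refine setIntegral_mono_set hint1 ?_ (HasSubset.Subset.eventuallyLE hBsub)
      filter_upwards [ae_restrict_mem measurableSet_Icc] with z hz
      have := hCle z hz
      simp only [Pi.zero_apply]
      linarith
    calc ε * C * m * (μ B).toReal = (μ B).toReal * (ε * C * m) := by ring
      _ = ∫ z in B, (ε * C * m) ∂μ := h5.symm
      _ ≤ ∫ z in B, (C * ν' z - F z) ∂μ := h4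
      _ ≤ ∫ z in Icc (0:ℝ) 1, (C * ν' z - F z) ∂μ := h6
  -- I ≤ M T
  have hIMT : I ≤ M * T := by
    have : (∫ z in Icc (0:ℝ) 1, ν' z ∂μ) ≤ ∫ z in Icc (0:ℝ) 1, M ∂μ := by
      refine setIntegral_mono_on hν'int
        (integrableOn_const hμfin.ne) measurableSet_Icc hMle
    rw [setIntegral_const] at this
    rw [hIdef]
    calc (∫ z in Icc (0:ℝ) 1, ν' z ∂μ) ≤ T • M := this
      _ = M * T := by rw [smul_eq_mul]; ring
  -- combine
  have hkey : ε * C * m * (μ B).toReal ≤ δ * C * I := by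
    have := hstep1
    rw [hsub] at hstep2
    nlinarith [hstep2, hstep1]
  have hI0 : 0 ≤ I := by
    rw [hIdef]
    refine setIntegral_nonneg measurableSet_Icc fun z hz => (hν'pos z hz).le
  have hfinal : (μ B).toReal ≤ ε * T := by
    have hεCm : 0 < ε * C * m := by positivity
    have hchain : ε * C * m * (μ B).toReal ≤ ε * C * m * (ε * T) := by
      calc ε * C * m * (μ B).toReal ≤ δ * C * I := hkey
        _ ≤ δ * C * (M * T) := by
            refine mul_le_mul_of_nonneg_left hIMT (by positivity)
        _ = ε * C * m * (ε * T) := by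
            rw [hδdef]; field_simp
    exact le_of_mul_le_mul_left hchain hεCm
  -- translate the goal set
  have heqz : ∀ z ∈ Icc (0:ℝ) 1,
      (1 / ν z) * (∫ y in z..1, ν y) = (1 / ν' z) * F z := by
    intro z hz
    simp only [hFdef]
    rw [hagree z hz, hintagree z hz]
  have hBeq : {z ∈ Icc (0:ℝ) 1 | (1 / ν z) * (∫ y in z..1, ν y) < (1 - ε) * C} = B := by
    rw [hBdef]
    ext z
    simp only [Set.mem_setOf_eq, Set.mem_sep_iff]
    constructor
    · rintro ⟨hz, hlt⟩
      exact ⟨hz, by rw [← heqz z hz]; exact hlt⟩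
    · rintro ⟨hz, hlt⟩
      exact ⟨hz, by rw [heqz z hz]; exact hlt⟩
  rw [hBeq]
  calc μ B = ENNReal.ofReal (μ B).toReal := (ENNReal.ofReal_toReal hμBfin).symm
    _ ≤ ENNReal.ofReal (ε * T) := ENNReal.ofReal_le_ofReal hfinal
    _ = ENNReal.ofReal ε * ENNReal.ofReal T := ENNReal.ofReal_mul hε.le
    _ = ENNReal.ofReal ε * μ (Icc (0:ℝ) 1) := by
        rw [hTdef, ENNReal.ofReal_toReal hμfin.ne]
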